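/- Let Γ be a quiver whose vertex type is finite and nonempty of cardinality n, such that: (a) for every vertex v there is exactly one pair (w, e) with e an arrow from v to w, and exactly one pair (u, e') with e' an arrow from u to v; and (b) Γ is connected, i.e. the equivalence relation on vertices generated by 'there exists an arrow from a to b' is total. Then Γ is isomorphic as a quiver to the cyclic quiver C_n: there is a bijection φ : ZMod n → (vertices of Γ) together with, for each v : ZMod n, a bijection between the arrows v ⟶ v+1 of C_n and the arrows φ v ⟶ φ (v+1) of Γ, exhausting all arrows of Γ. (Every finite cyclically-directed graph with n vertices is isomorphic to the cyclically-directed graph with vertex set ZMod n.) -/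

import Mathlib

open CategoryTheory

/-- The cyclic quiver `C n`: vertex set `ZMod n`, with exactly one arrow `v ⟶ v + 1` for each
vertex `v`, and no other arrows. -/
abbrev CyclicQuiver (n : ℕ) := ZMod n

instance (n : ℕ) : Quiver (CyclicQuiver n) :=
  ⟨fun a b => PLift (b = a + 1)⟩

/-- Every finite cyclically-directed graph with `n` vertices — a quiver on a
finite nonempty vertex type of cardinality `n` in which every vertex has exactly one exiting
and exactly one entering edge, and which is connected — is isomorphic as a quiver to the
cyclic quiver `C n`. -/
theorem stmt_13 {Γ : Type*} [Quiver Γ] [Fintype Γ] [Nonempty Γ] (n : ℕ)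
    (hcard : Fintype.card Γ = n)
    (hout : ∀ v : Γ, ∃! p : Σ' w : Γ, v ⟶ w, True)
    (hin : ∀ v : Γ, ∃! p : Σ' u : Γ, u ⟶ v, True)
    (hconn : ∀ a b : Γ, Relation.EqvGen (fun x y : Γ => Nonempty (x ⟶ y)) a b) :
    ∃ φ : CyclicQuiver n ⥤q Γ, Function.Bijective φ.obj ∧
      ∀ a b : CyclicQuiver n, Function.Bijective (fun e : a ⟶ b => φ.map e) := by
  classical
  subst hcard
  set n := Fintype.card Γ with hn
  haveI : NeZero n := ⟨Fintype.card_ne_zero⟩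
  have outuniq : ∀ {v : Γ} (p q : Σ' w : Γ, v ⟶ w), p = q :=
    fun p q => (hout _).unique trivial trivial
  have inuniq : ∀ {v : Γ} (p q : Σ' u : Γ, u ⟶ v), p = q :=
    fun p q => (hin _).unique trivial trivial
  let S : ∀ v : Γ, Σ' w : Γ, v ⟶ w := fun v => (hout v).exists.choose
  let succ : Γ → Γ := fun v => (S v).1
  let ed : ∀ v : Γ, v ⟶ succ v := fun v => (S v).2
  have edge_succ : ∀ {x y : Γ}, (x ⟶ y) → y = succ x := by
    intro x y e
    exact congrArg PSigma.fst (outuniq ⟨y, e⟩ (S x))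
  have hom_sub : ∀ {x y : Γ} (e₁ e₂ : x ⟶ y), e₁ = e₂ := by
    intro x y e₁ e₂
    have h := outuniq (⟨y, e₁⟩ : Σ' w : Γ, x ⟶ w) ⟨y, e₂⟩
    injection h with h1 h2
  have succ_inj : Function.Injective succ := by
    intro a b h
    have e : a ⟶ succ b := h ▸ ed a
    have := inuniq (⟨a, e⟩ : Σ' u : Γ, u ⟶ succ b) ⟨b, ed b⟩
    exact congrArg PSigma.fst this
  let σ : Equiv.Perm Γ := Equiv.ofBijective succ (Finite.injective_iff_bijective.mp succ_inj)
  have hσ : ∀ v, σ v = succ v := fun v => rfl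
  have reach : ∀ a b : Γ, ∃ k : ℕ, (σ ^ k) a = b := by
    intro a b
    induction hconn a b with
    | rel x y h => exact ⟨1, by rw [pow_one, hσ, ← edge_succ h.some]⟩
    | refl x => exact ⟨0, by simp⟩
    | symm x y h ih =>
        obtain ⟨k, hk⟩ := ih
        have hN : 0 < orderOf σ := orderOf_pos σ
        refine ⟨k * (orderOf σ - 1), ?_⟩
        have he : k * (orderOf σ - 1) + k = orderOf σ * k := by
          rw [← Nat.mul_succ, Nat.succ_eq_add_one, Nat.sub_add_cancel hN, mul_comm]
        have h1 : σ ^ (k * (orderOf σ - 1) + k) = 1 := by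
          rw [he, pow_mul, pow_orderOf_eq_one, one_pow]
        calc (σ ^ (k * (orderOf σ - 1))) y
            = (σ ^ (k * (orderOf σ - 1))) ((σ ^ k) x) := by rw [hk]
          _ = (σ ^ (k * (orderOf σ - 1) + k)) x := by
              rw [pow_add, Equiv.Perm.mul_apply]
          _ = x := by rw [h1]; rfl
    | trans x y z h1 h2 ih1 ih2 =>
        obtain ⟨k1, hk1⟩ := ih1
        obtain ⟨k2, hk2⟩ := ih2
        exact ⟨k2 + k1, by rw [pow_add, Equiv.Perm.mul_apply, hk1, hk2]⟩
  obtain ⟨x0⟩ := ‹Nonempty Γ›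
  have key : ∃ d : ℕ, 0 < d ∧ d ≤ n ∧ (σ ^ d) x0 = x0 := by
    have hlt : Fintype.card Γ < Fintype.card (Fin (n + 1)) := by simp [hn]
    obtain ⟨i, j, hne, heq⟩ :=
      Fintype.exists_ne_map_eq_of_card_lt (fun k : Fin (n + 1) => (σ ^ (k : ℕ)) x0) hlt
    have main : ∀ i j : Fin (n + 1), (i : ℕ) < (j : ℕ) →
        (σ ^ (i : ℕ)) x0 = (σ ^ (j : ℕ)) x0 → ∃ d : ℕ, 0 < d ∧ d ≤ n ∧ (σ ^ d) x0 = x0 := by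
      intro i j hij heq
      refine ⟨(j : ℕ) - (i : ℕ), by omega, by have := j.isLt; omega, ?_⟩
      have h2 : (σ ^ (i : ℕ)) ((σ ^ ((j : ℕ) - (i : ℕ))) x0) = (σ ^ (i : ℕ)) x0 := by
        rw [← Equiv.Perm.mul_apply, ← pow_add]
        have hh : (i : ℕ) + ((j : ℕ) - (i : ℕ)) = (j : ℕ) := by omega
        rw [hh, ← heq]
      exact (σ ^ (i : ℕ)).injective h2
    rcases lt_or_gt_of_ne hne with h | h
    · exact main i j (by exact_mod_cast h) heq
    · exact main j i (by exact_mod_cast h) heq.symm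
  obtain ⟨d, hd0, hdn, hfix⟩ := key
  have fixmul : ∀ q : ℕ, (σ ^ (d * q)) x0 = x0 := by
    intro q
    induction q with
    | zero => simp
    | succ q ih => rw [Nat.mul_succ, pow_add, Equiv.Perm.mul_apply, hfix, ih]
  have reduce : ∀ k : ℕ, (σ ^ (k % d)) x0 = (σ ^ k) x0 := by
    intro k
    conv_rhs => rw [← Nat.mod_add_div k d]
    rw [pow_add, Equiv.Perm.mul_apply, fixmul]
  have surjd : Function.Surjective (fun k : Fin d => (σ ^ (k : ℕ)) x0) := by
    intro b
    obtain ⟨k, hk⟩ := reach x0 b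
    exact ⟨⟨k % d, Nat.mod_lt _ hd0⟩, (reduce k).trans hk⟩
  have hnd : n ≤ d := by
    have := Fintype.card_le_of_surjective _ surjd
    simpa [hn] using this
  have hdn' : d = n := le_antisymm hdn hnd
  have hfixn : (σ ^ n) x0 = x0 := hdn' ▸ hfix
  have reducen : ∀ k : ℕ, (σ ^ (k % n)) x0 = (σ ^ k) x0 := hdn' ▸ reduce
  let g : ZMod n → Γ := fun a => (σ ^ a.val) x0
  have gnat : ∀ k : ℕ, g (k : ZMod n) = (σ ^ k) x0 := by
    intro k
    show (σ ^ (ZMod.val (k : ZMod n))) x0 = _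
    rw [ZMod.val_natCast, reducen]
  have gsurj : Function.Surjective g := by
    intro b
    obtain ⟨k, hk⟩ := reach x0 b
    exact ⟨(k : ZMod n), (gnat k).trans hk⟩
  have gbij : Function.Bijective g :=
    (Fintype.bijective_iff_surjective_and_card g).mpr ⟨gsurj, by simp [ZMod.card]; exact hn⟩
  have gsucc : ∀ a : ZMod n, g (a + 1) = succ (g a) := by
    intro a
    have h1 : a + 1 = ((a.val + 1 : ℕ) : ZMod n) := by
      rw [Nat.cast_add, Nat.cast_one, ZMod.natCast_val, ZMod.cast_id]
    calc g (a + 1) = (σ ^ (a.val + 1)) x0 := by rw [h1, gnat]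
      _ = σ ((σ ^ a.val) x0) := by rw [pow_succ', Equiv.Perm.mul_apply]
      _ = succ (g a) := rfl
  refine ⟨⟨g, fun {a b} e => (show succ (g a) = g b from by rw [e.down, gsucc]) ▸ ed (g a)⟩,
    gbij, ?_⟩
  intro a b
  constructor
  · intro e₁ e₂ _
    exact Subsingleton.elim (α := PLift (b = a + 1)) e₁ e₂
  · intro E
    have hb : g b = succ (g a) := edge_succ E
    have hb' : b = a + 1 := gbij.injective (by rw [hb, ← gsucc])
    exact ⟨⟨hb'⟩, hom_sub _ E⟩
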